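/- Let X be a standard Borel space. For each i ∈ ℕ, the set Tᵢ := {d : ℕ → X : d(j) = d(i) for all j ≥ i} of sequences terminating after i steps is measurable in the product σ-algebra on X^ℕ; consequently, the set T := ⋃_{i∈ℕ} Tᵢ of eventually constant sequences is measurable, and for every measurable A ⊆ X the set of eventually constant sequences whose eventual value lies in A is measurable in the product σ-algebra on X^ℕ. In particular, the limit-instance map, sending an eventually constant sequence to its eventual value and all other sequences to a distinguished error point ⊥, is measurable. -/
import Mathlib


open MeasureTheory

open Classical in
/-- The limit-instance map: an eventually constant sequence is sent to its eventual
value, and all other sequences are sent to the distinguished error point `⊥ = none`. -/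
noncomputable def limitInst {X : Type*} (d : ℕ → X) : Option X :=
  if h : ∃ i : ℕ, ∀ j ≥ i, d j = d i then some (d h.choose) else none

/-- On a standard Borel space `X`: for each `i`, the set of sequences terminating after
`i` steps is measurable in the product σ-algebra on `X^ℕ`; consequently the set of
eventually constant sequences is measurable; for every measurable `A ⊆ X`, the set of
eventually constant sequences with eventual value in `A` is measurable; and the
limit-instance map into `X ∪ {⊥}` (carrying the σ-algebra of measurable subsets of `X`
and their unions with `{⊥}`, i.e. the σ-algebra mapped along `some`) is measurable. -/
theorem measurable_limitInst (X : Type*) [MeasurableSpace X] [StandardBorelSpace X] :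
    (∀ i : ℕ, MeasurableSet {d : ℕ → X | ∀ j ≥ i, d j = d i}) ∧
    MeasurableSet {d : ℕ → X | ∃ i : ℕ, ∀ j ≥ i, d j = d i} ∧
    (∀ A : Set X, MeasurableSet A →
      MeasurableSet {d : ℕ → X | ∃ i : ℕ, (∀ j ≥ i, d j = d i) ∧ d i ∈ A}) ∧
    @Measurable (ℕ → X) (Option X) inferInstance
      (MeasurableSpace.map some (inferInstance : MeasurableSpace X)) limitInst := by
  letI := upgradeStandardBorel X
  have hdiag : MeasurableSet (Set.diagonal X) := isClosed_diagonal.measurableSet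
  have hT : ∀ i : ℕ, MeasurableSet {d : ℕ → X | ∀ j ≥ i, d j = d i} := by
    intro i
    have : {d : ℕ → X | ∀ j ≥ i, d j = d i} =
        ⋂ j ∈ Set.Ici i, (fun d : ℕ → X => (d j, d i)) ⁻¹' Set.diagonal X := by
      ext d; simp [Set.diagonal, eq_comm]
    rw [this]
    exact MeasurableSet.biInter (Set.to_countable _) fun j _ =>
      (((measurable_pi_apply j).prodMk (measurable_pi_apply i))) hdiag
  refine ⟨hT, ?_, ?_, ?_⟩
  · have : {d : ℕ → X | ∃ i : ℕ, ∀ j ≥ i, d j = d i} =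
        ⋃ i, {d : ℕ → X | ∀ j ≥ i, d j = d i} := by
      ext d; simp [Set.mem_iUnion]
    rw [this]; exact MeasurableSet.iUnion hT
  · intro A hA
    have : {d : ℕ → X | ∃ i : ℕ, (∀ j ≥ i, d j = d i) ∧ d i ∈ A} =
        ⋃ i, ({d : ℕ → X | ∀ j ≥ i, d j = d i} ∩ (fun d : ℕ → X => d i) ⁻¹' A) := by
      ext d; simp [Set.mem_iUnion]
    rw [this]
    exact MeasurableSet.iUnion fun i => (hT i).inter ((measurable_pi_apply i) hA)
  · intro t ht
    replace ht : MeasurableSet (some ⁻¹' t) := ht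
    set A : Set X := some ⁻¹' t with hAdef
    have hval : ∀ (d : ℕ → X) (h : ∃ i : ℕ, ∀ j ≥ i, d j = d i) (i : ℕ),
        (∀ j ≥ i, d j = d i) → d i = d h.choose := by
      intro d h i hi
      have h1 := hi (max i h.choose) (le_max_left _ _)
      have h2 := h.choose_spec (max i h.choose) (le_max_right _ _)
      rw [← h1, h2]
    have hS : MeasurableSet {d : ℕ → X | ∃ i : ℕ, (∀ j ≥ i, d j = d i) ∧ d i ∈ A} := by
      have : {d : ℕ → X | ∃ i : ℕ, (∀ j ≥ i, d j = d i) ∧ d i ∈ A} =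
          ⋃ i, ({d : ℕ → X | ∀ j ≥ i, d j = d i} ∩ (fun d : ℕ → X => d i) ⁻¹' A) := by
        ext d; simp [Set.mem_iUnion]
      rw [this]
      exact MeasurableSet.iUnion fun i => (hT i).inter ((measurable_pi_apply i) ht)
    have hTm : MeasurableSet {d : ℕ → X | ∃ i : ℕ, ∀ j ≥ i, d j = d i} := by
      have : {d : ℕ → X | ∃ i : ℕ, ∀ j ≥ i, d j = d i} =
          ⋃ i, {d : ℕ → X | ∀ j ≥ i, d j = d i} := by
        ext d; simp [Set.mem_iUnion]
      rw [this]; exact MeasurableSet.iUnion hT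
    by_cases hn : none ∈ t
    · have key : limitInst ⁻¹' t =
          {d : ℕ → X | ∃ i : ℕ, (∀ j ≥ i, d j = d i) ∧ d i ∈ A} ∪
          {d : ℕ → X | ∃ i : ℕ, ∀ j ≥ i, d j = d i}ᶜ := by
        ext d
        simp only [Set.mem_preimage, Set.mem_union, Set.mem_setOf_eq, Set.mem_compl_iff,
          limitInst]
        by_cases h : ∃ i : ℕ, ∀ j ≥ i, d j = d i
        · rw [dif_pos h]
          constructor
          · intro hs; exact Or.inl ⟨h.choose, h.choose_spec, hs⟩
          · rintro (⟨i, hi, hiA⟩ | hc)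
            · rwa [hval d h i hi] at hiA
            · exact absurd h hc
        · rw [dif_neg h]
          exact ⟨fun _ => Or.inr h, fun _ => hn⟩
      rw [key]
      exact hS.union hTm.compl
    · have key : limitInst ⁻¹' t =
          {d : ℕ → X | ∃ i : ℕ, (∀ j ≥ i, d j = d i) ∧ d i ∈ A} := by
        ext d
        simp only [Set.mem_preimage, Set.mem_setOf_eq, limitInst]
        by_cases h : ∃ i : ℕ, ∀ j ≥ i, d j = d i
        · rw [dif_pos h]
          constructor
          · intro hs; exact ⟨h.choose, h.choose_spec, hs⟩
          · rintro ⟨i, hi, hiA⟩; rwa [hval d h i hi] at hiA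
        · rw [dif_neg h]
          exact ⟨fun hc => absurd hc hn, fun ⟨i, hi, _⟩ => absurd ⟨i, hi⟩ h⟩
      rw [key]; exact hS
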